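/- Every self-adjoint contraction T on a real (or complex) Hilbert space K can be dilated to a self-adjoint unitary (symmetry) U on L = K ⊕ K, i.e., there is a self-adjoint U with U² = 1 on K ⊕ K such that P U |_K = T, where P is the projection onto the first coordinate. Explicitly, U = [[T, √(1−T²)], [√(1−T²), −T]] works. -/

import Mathlib

/-- Every self-adjoint contraction `T` on a Hilbert space `K` dilates to a
self-adjoint unitary `U` on `K ⊕ K` (with the `ℓ²` inner product): `U* = U`, `U² = 1` and
`P U |_K = T` where `P` is the projection onto the first coordinate. -/
theorem stmt12 {K : Type*} [NormedAddCommGroup K] [InnerProductSpace ℂ K] [CompleteSpace K]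
    (T : K →L[ℂ] K) (hsa : IsSelfAdjoint T) (hcontr : ‖T‖ ≤ 1) :
    ∃ U : WithLp 2 (K × K) →L[ℂ] WithLp 2 (K × K),
      IsSelfAdjoint U ∧ U ∘L U = 1 ∧
      ∀ x : K, ((WithLp.equiv 2 (K × K)) (U ((WithLp.equiv 2 (K × K)).symm (x, 0)))).1
        = T x := by
  obtain h | h := subsingleton_or_nontrivial K
  · haveI : Subsingleton (WithLp 2 (K × K)) := (WithLp.equiv 2 (K × K)).subsingleton
    exact ⟨1, star_one _, by ext v; exact Subsingleton.elim _ _,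
      fun x => Subsingleton.elim _ _⟩
  set D : K →L[ℂ] K := cfc (fun x : ℝ => Real.sqrt (1 - x ^ 2)) T with hD
  have hDsa : IsSelfAdjoint D := cfc_predicate _ T
  have hspec : ∀ x ∈ spectrum ℝ T, x ^ 2 ≤ 1 := by
    intro x hx
    have := spectrum.norm_le_norm_of_mem hx
    have h1 : |x| ≤ 1 := by simpa [Real.norm_eq_abs] using this.trans hcontr
    calc x ^ 2 = |x| ^ 2 := (sq_abs x).symm
    _ ≤ 1 := by nlinarith [abs_nonneg x]
  have hcomm : T * D = D * T := by
    have : Commute (cfc (fun x : ℝ => x) T) (cfc (fun x : ℝ => Real.sqrt (1 - x ^ 2)) T) :=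
      cfc_commute_cfc _ _ T
    rwa [cfc_id' ℝ T] at this
  have hsq : T * T + D * D = 1 := by
    have h1 : D * D = cfc (fun x : ℝ => 1 - x ^ 2) T := by
      rw [hD, ← cfc_mul _ _ T]
      refine cfc_congr fun x hx => ?_
      exact Real.mul_self_sqrt (by linarith [hspec x hx])
    have h2 : cfc (fun x : ℝ => 1 - x ^ 2) T = 1 - T * T := by
      rw [cfc_sub _ _ T, cfc_const_one ℝ T, cfc_pow (fun x : ℝ => x) 2 T, cfc_id' ℝ T, sq]
    rw [h1, h2]; abel
  have hT' : ∀ x y : K, (inner ℂ (T x) y : ℂ) = inner ℂ x (T y) := fun x y => hsa.isSymmetric x y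
  have hD' : ∀ x y : K, (inner ℂ (D x) y : ℂ) = inner ℂ x (D y) := fun x y => hDsa.isSymmetric x y
  let e : WithLp 2 (K × K) ≃L[ℂ] K × K := WithLp.prodContinuousLinearEquiv 2 ℂ K K
  let F : K × K →L[ℂ] K × K :=
    ((T ∘L .fst ℂ K K) + (D ∘L .snd ℂ K K)).prod ((D ∘L .fst ℂ K K) - (T ∘L .snd ℂ K K))
  have hF : ∀ w : K × K, F w = (T w.1 + D w.2, D w.1 - T w.2) := fun w => rfl
  have hv1 : ∀ x : K, T (T x) + D (D x) = x := fun x => by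
    have := congrArg (fun S : K →L[ℂ] K => S x) hsq
    simpa using this
  have hcv : ∀ x : K, T (D x) = D (T x) := fun x => by
    have := congrArg (fun S : K →L[ℂ] K => S x) hcomm
    simpa using this
  refine ⟨(e.symm : K × K →L[ℂ] WithLp 2 (K × K)) ∘L F ∘L (e : _ →L[ℂ] K × K), ?_, ?_, ?_⟩
  · rw [ContinuousLinearMap.isSelfAdjoint_iff_isSymmetric]
    intro v w
    simp only [ContinuousLinearMap.coe_coe, ContinuousLinearMap.comp_apply,
      WithLp.prod_inner_apply]
    show (inner ℂ (T v.ofLp.1 + D v.ofLp.2) w.ofLp.1 + inner ℂ (D v.ofLp.1 - T v.ofLp.2) w.ofLp.2 : ℂ)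
      = inner ℂ v.ofLp.1 (T w.ofLp.1 + D w.ofLp.2) + inner ℂ v.ofLp.2 (D w.ofLp.1 - T w.ofLp.2)
    simp only [inner_add_left, inner_add_right, inner_sub_left, inner_sub_right, hT', hD']
    ring
  · ext v
    simp only [ContinuousLinearMap.comp_apply, ContinuousLinearMap.coe_coe,
      ContinuousLinearEquiv.coe_coe, ContinuousLinearMap.one_apply, e.apply_symm_apply]
    rw [e.symm_apply_eq]
    set w := e v
    rw [hF, hF]
    ext
    · show T (T w.1 + D w.2) + D (D w.1 - T w.2) = w.1
      simp only [map_add, map_sub]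
      rw [hcv,
        show T (T w.1) + D (T w.2) + (D (D w.1) - D (T w.2)) = T (T w.1) + D (D w.1) by abel,
        hv1]
    · show D (T w.1 + D w.2) - T (D w.1 - T w.2) = w.2
      simp only [map_add, map_sub]
      rw [hcv,
        show D (T w.1) + D (D w.2) - (D (T w.1) - T (T w.2)) = T (T w.2) + D (D w.2) by abel,
        hv1]
  · intro x
    simp [e, F]
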